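/- If P(x₁,...,xₙ) is real stable, then its partial derivative ∂P/∂x₁ is real stable or identically zero. -/

import Mathlib

open Polynomial

/-- Evaluating (at `y`) a multivariate polynomial substituted with univariate polynomials. -/
lemma eval_aeval_mv {R : Type*} [CommSemiring R] [Algebra R ℂ] {m : ℕ}
    (σ : Fin m → Polynomial ℂ) (p : MvPolynomial (Fin m) R) (y : ℂ) :
    Polynomial.eval y (MvPolynomial.aeval σ p) =
      MvPolynomial.aeval (fun i => Polynomial.eval y (σ i)) p := by
  induction p using MvPolynomial.induction_on with
  | C a => simp [Polynomial.algebraMap_apply]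
  | add p q hp hq => simp [hp, hq]
  | mul_X p i hp => simp [hp]

/-- Substitution `x₀ ↦ X`, `x_j ↦ c j` intertwines `pderiv 0` with `derivative`. -/
lemma deriv_aeval_mv {m : ℕ} (c : Fin (m + 1) → ℂ) (p : MvPolynomial (Fin (m + 1)) ℝ) :
    Polynomial.derivative
        (MvPolynomial.aeval (fun j => if j = 0 then Polynomial.X else Polynomial.C (c j)) p) =
      MvPolynomial.aeval (fun j => if j = 0 then Polynomial.X else Polynomial.C (c j))
        (MvPolynomial.pderiv 0 p) := by
  induction p using MvPolynomial.induction_on with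
  | C a => simp [Polynomial.algebraMap_apply]
  | add p q hp hq => simp [hp, hq]
  | mul_X p i hp =>
    by_cases hi : i = 0
    · subst hi
      simp [MvPolynomial.pderiv_mul, derivative_mul, hp]
      ring
    · simp [MvPolynomial.pderiv_mul, derivative_mul, hp, hi, Pi.single_eq_of_ne hi, mul_comm]

/-- Log-derivative sign lemma for univariate complex polynomials without roots in
the open upper half plane. -/
lemma logderiv_im {a : ℂ} (ha : 0 < a.im) :
    ∀ N : ℕ, ∀ q : Polynomial ℂ, q.natDegree ≤ N →
      (∀ x : ℂ, 0 < x.im → q.eval x ≠ 0) →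
      ((q.derivative.eval a) / q.eval a).im ≤ 0 ∧
        (0 < q.natDegree → ((q.derivative.eval a) / q.eval a).im < 0) := by
  intro N
  induction N with
  | zero =>
    intro q hdeg hq
    rw [Polynomial.derivative_of_natDegree_zero (Nat.le_zero.mp hdeg)]
    simp [Nat.le_zero.mp hdeg]
  | succ N ih =>
    intro q hdeg hq
    by_cases h0 : q.natDegree = 0
    · rw [Polynomial.derivative_of_natDegree_zero h0]
      simp [h0]
    · have hqne : q ≠ 0 := fun h => hq Complex.I (by simp) (by simp [h])
      have hdegpos : 0 < q.degree :=
        Polynomial.natDegree_pos_iff_degree_pos.mp (Nat.pos_of_ne_zero h0)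
      obtain ⟨r, hr⟩ := Complex.exists_root hdegpos
      have hrim : r.im ≤ 0 := by
        by_contra h
        push_neg at h
        exact hq r h hr
      obtain ⟨q₁, hfac⟩ := Polynomial.dvd_iff_isRoot.mpr hr
      have hq₁ne : q₁ ≠ 0 := by
        rintro rfl
        rw [mul_zero] at hfac
        exact hqne hfac
      have hq₁ : ∀ x : ℂ, 0 < x.im → q₁.eval x ≠ 0 := by
        intro x hx hx0
        exact hq x hx (by rw [hfac]; simp [hx0])
      have hdeg₁ : q₁.natDegree ≤ N := by
        have h1 : q.natDegree = 1 + q₁.natDegree := by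
          rw [hfac, Polynomial.natDegree_mul (Polynomial.X_sub_C_ne_zero r) hq₁ne,
            Polynomial.natDegree_X_sub_C]
        omega
      have harim : 0 < (a - r).im := by
        rw [Complex.sub_im]; linarith
      have har : a - r ≠ 0 := fun h => by rw [h] at harim; simp at harim
      have haq : q.eval a ≠ 0 := hq a ha
      have haq₁ : q₁.eval a ≠ 0 := hq₁ a ha
      have hda : q.derivative.eval a = q₁.eval a + (a - r) * q₁.derivative.eval a := by
        rw [hfac, Polynomial.derivative_mul]
        simp
      have hqa : q.eval a = (a - r) * q₁.eval a := by rw [hfac]; simp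
      have key : q.derivative.eval a / q.eval a = (a - r)⁻¹ + q₁.derivative.eval a / q₁.eval a := by
        rw [hda, hqa]
        field_simp
      have h1 : ((a - r)⁻¹).im < 0 := by
        rw [Complex.inv_im]
        apply div_neg_of_neg_of_pos
        · linarith
        · exact Complex.normSq_pos.mpr har
      have h2 := (ih q₁ hdeg₁ hq₁).1
      constructor
      · rw [key, Complex.add_im]; linarith
      · intro _
        rw [key, Complex.add_im]; linarith

/-- A real polynomial whose evaluation vanishes on the whole open upper poly-halfplane is zero. -/
lemma mv_zero_of_vanish {m : ℕ} (Q : MvPolynomial (Fin m) ℝ)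
    (h : ∀ w : Fin m → ℂ, (∀ j, 0 < (w j).im) → MvPolynomial.aeval w Q = 0) : Q = 0 := by
  classical
  have key : ∀ k : ℕ, ∀ w : Fin m → ℂ, (∀ j : Fin m, k ≤ (j : ℕ) → 0 < (w j).im) →
      MvPolynomial.aeval w Q = 0 := by
    intro k
    induction k with
    | zero => exact fun w hw => h w (fun j => hw j (Nat.zero_le _))
    | succ k ih =>
      intro w hw
      by_cases hk : k < m
      · set jk : Fin m := ⟨k, hk⟩ with hjk
        set q : Polynomial ℂ :=
          MvPolynomial.aeval (fun i => if i = jk then Polynomial.X else Polynomial.C (w i)) Q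
          with hqdef
        have heval : ∀ y : ℂ,
            q.eval y = MvPolynomial.aeval (fun i => if i = jk then y else w i) Q := by
          intro y
          rw [hqdef, eval_aeval_mv]
          have he : (fun i => Polynomial.eval y (if i = jk then Polynomial.X else Polynomial.C (w i)))
              = fun i => if i = jk then y else w i := by
            funext i
            split <;> simp
          rw [he]
        have hq0 : q = 0 := by
          apply Polynomial.eq_zero_of_infinite_isRoot
          apply Set.infinite_of_injective_forall_mem (f := fun n : ℕ => (n : ℂ) + Complex.I)
          · intro n₁ n₂ hn
            have h5 := congrArg Complex.re hn
            simpa using h5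
          · intro nn
            show q.IsRoot _
            rw [Polynomial.IsRoot, heval]
            apply ih
            intro j hj
            by_cases hj' : j = jk
            · simp [hj']
            · rw [if_neg hj']
              apply hw j
              have : (j : ℕ) ≠ k := fun hc => hj' (Fin.ext hc)
              omega
        have h2 := heval (w jk)
        rw [hq0] at h2
        simp only [Polynomial.eval_zero] at h2
        have h3 : (fun i => if i = jk then w jk else w i) = w := by
          funext i
          split <;> simp_all
        rw [h3] at h2
        exact h2.symm
      · exact ih w (fun j hj => absurd (lt_of_le_of_lt hj j.isLt) hk)
  have hall : ∀ w : Fin m → ℂ, MvPolynomial.eval w (MvPolynomial.map (algebraMap ℝ ℂ) Q) = 0 := by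
    intro w
    rw [MvPolynomial.eval_map, ← MvPolynomial.aeval_def]
    exact key m w (fun j hj => absurd j.isLt (Nat.not_lt.mpr hj))
  have hmap : MvPolynomial.map (algebraMap ℝ ℂ) Q = 0 := by
    apply MvPolynomial.funext
    intro x
    rw [hall x, map_zero]
  exact MvPolynomial.map_injective (algebraMap ℝ ℂ) (algebraMap ℝ ℂ).injective
    (by rw [hmap, map_zero])
def RealStable {σ : Type*} (P : MvPolynomial σ ℝ) : Prop :=
  ∀ z : σ → ℂ, (∀ i, 0 < (z i).im) → MvPolynomial.aeval z P ≠ 0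

/-- If `P` is real stable then `∂P/∂x₁` is real stable or identically zero. -/
theorem stmt_3 (n : ℕ) (P : MvPolynomial (Fin (n + 1)) ℝ) (hP : RealStable P) :
    MvPolynomial.pderiv 0 P = 0 ∨ RealStable (MvPolynomial.pderiv 0 P) := by
  classical
  by_cases h0 : MvPolynomial.pderiv 0 P = 0
  · exact Or.inl h0
  refine Or.inr ?_
  intro z hz
  by_contra hg0
  apply h0
  apply mv_zero_of_vanish
  intro u hu
  -- the line through `z` and `u`
  set ℓ : ℂ → Fin (n + 1) → ℂ := fun t j => z j + (u j - z j) * t with hℓ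
  have hℓ0 : ℓ 0 = z := by funext j; simp [hℓ]
  have hℓ1 : ℓ 1 = u := by funext j; simp [hℓ]
  set U : Set ℂ := {t | ∀ j, 0 < (ℓ t j).im} with hUdef
  have h0U : (0 : ℂ) ∈ U := by rw [hUdef]; intro j; rw [hℓ0]; exact hz j
  have h1U : (1 : ℂ) ∈ U := by rw [hUdef]; intro j; rw [hℓ1]; exact hu j
  have hUopen : IsOpen U := by
    have hrw : U = ⋂ j, {t : ℂ | 0 < (ℓ t j).im} := by
      ext t
      simp [hUdef, Set.mem_iInter]
    rw [hrw]
    apply isOpen_iInter_of_finite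
    intro j
    apply isOpen_lt continuous_const
    exact Complex.continuous_im.comp (continuous_const.add (continuous_const.mul continuous_id))
  have hUconv : Convex ℝ U := by
    intro x hx y hy a b ha hb hab
    intro j
    have hxj := hx j
    have hyj := hy j
    have hcomb : (ℓ (a • x + b • y) j).im = a * (ℓ x j).im + b * (ℓ y j).im := by
      simp only [hℓ, Complex.real_smul, Complex.add_im, Complex.mul_im, Complex.add_re,
        Complex.mul_re, Complex.ofReal_re, Complex.ofReal_im]
      ring_nf
      linear_combination (-(z j).im) * hab
    rw [hcomb]
    by_cases hA : 0 < a
    · exact add_pos_of_pos_of_nonneg (mul_pos hA hxj) (mul_nonneg hb hyj.le)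
    · have ha0 : a = 0 := le_antisymm (not_lt.mp hA) ha
      have hb1 : b = 1 := by linarith
      rw [ha0, hb1]
      simpa using hyj
  -- univariate polynomials along the line
  set F : Polynomial ℂ :=
    MvPolynomial.aeval (fun j => Polynomial.C (z j) + Polynomial.C (u j - z j) * Polynomial.X) P
    with hFdef
  set G : Polynomial ℂ :=
    MvPolynomial.aeval (fun j => Polynomial.C (z j) + Polynomial.C (u j - z j) * Polynomial.X)
      (MvPolynomial.pderiv 0 P) with hGdef
  have hFeval : ∀ t : ℂ, F.eval t = MvPolynomial.aeval (ℓ t) P := by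
    intro t
    rw [hFdef, eval_aeval_mv]
    have he : (fun j => Polynomial.eval t
        (Polynomial.C (z j) + Polynomial.C (u j - z j) * Polynomial.X)) = ℓ t := by
      funext j; simp [hℓ]
    rw [he]
  have hGeval : ∀ t : ℂ, G.eval t = MvPolynomial.aeval (ℓ t) (MvPolynomial.pderiv 0 P) := by
    intro t
    rw [hGdef, eval_aeval_mv]
    have he : (fun j => Polynomial.eval t
        (Polynomial.C (z j) + Polynomial.C (u j - z j) * Polynomial.X)) = ℓ t := by
      funext j; simp [hℓ]
    rw [he]
  -- the polynomial in the first variable, with other variables on the line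
  set q : ℂ → Polynomial ℂ := fun t =>
    MvPolynomial.aeval (fun j => if j = 0 then Polynomial.X else Polynomial.C (ℓ t j)) P
    with hqdef
  have hqeval : ∀ t y : ℂ,
      (q t).eval y = MvPolynomial.aeval (fun j => if j = 0 then y else ℓ t j) P := by
    intro t y
    rw [hqdef]
    rw [eval_aeval_mv]
    have he : (fun j => Polynomial.eval y
        (if j = 0 then Polynomial.X else Polynomial.C (ℓ t j)))
        = fun j => if j = 0 then y else ℓ t j := by
      funext j; split <;> simp
    rw [he]
  have hqroot : ∀ t ∈ U, ∀ y : ℂ, 0 < y.im → (q t).eval y ≠ 0 := by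
    intro t ht y hy
    rw [hqeval]
    apply hP
    intro i
    by_cases hi : i = 0
    · rw [if_pos hi]; exact hy
    · rw [if_neg hi]; exact ht i
  have hq_at : ∀ t : ℂ, (q t).eval (ℓ t 0) = F.eval t := by
    intro t
    rw [hqeval, hFeval]
    have he : (fun j => if j = 0 then ℓ t 0 else ℓ t j) = ℓ t := by
      funext j
      split
      · next hj => rw [hj]
      · rfl
    rw [he]
  have hq_deriv : ∀ t : ℂ, (q t).derivative =
      MvPolynomial.aeval (fun j => if j = 0 then Polynomial.X else Polynomial.C (ℓ t j))
        (MvPolynomial.pderiv 0 P) := by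
    intro t
    rw [hqdef]
    exact deriv_aeval_mv (ℓ t) P
  have hq_deriv_at : ∀ t : ℂ, (q t).derivative.eval (ℓ t 0) = G.eval t := by
    intro t
    rw [hq_deriv, eval_aeval_mv, hGeval]
    have he : (fun j => Polynomial.eval (ℓ t 0)
        (if j = 0 then Polynomial.X else Polynomial.C (ℓ t j))) = ℓ t := by
      funext j
      split
      · next hj => rw [hj]; simp
      · simp
    rw [he]
  -- the logarithmic derivative along the line
  set h : ℂ → ℂ := fun t => G.eval t / F.eval t with hhdef
  have hden : ∀ t ∈ U, F.eval t ≠ 0 := by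
    intro t ht
    rw [hFeval]
    exact hP (ℓ t) ht
  have him : ∀ t ∈ U, (h t).im ≤ 0 := by
    intro t ht
    have := (logderiv_im (ht 0) (q t).natDegree (q t) le_rfl (hqroot t ht)).1
    rwa [hq_at, hq_deriv_at] at this
  have hh0 : h 0 = 0 := by
    rw [hhdef]
    have : G.eval 0 = 0 := by
      rw [hGeval, hℓ0]
      exact hg0
    simp [this]
  have hdiff : DifferentiableOn ℂ h U := by
    apply DifferentiableOn.div
    · exact (Polynomial.differentiable G).differentiableOn
    · exact (Polynomial.differentiable F).differentiableOn
    · exact hden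
  set φ : ℂ → ℂ := fun t => Complex.exp (-Complex.I * h t) with hφdef
  have hφdiff : DifferentiableOn ℂ φ U := (hdiff.const_mul (-Complex.I)).cexp
  have hnorm : ∀ t : ℂ, ‖φ t‖ = Real.exp ((h t).im) := by
    intro t
    rw [hφdef]
    rw [Complex.norm_exp]
    congr 1
    simp [Complex.mul_re]
  have hmax : IsMaxOn (norm ∘ φ) U 0 := by
    intro t ht
    show ‖φ t‖ ≤ ‖φ 0‖
    rw [hnorm, hnorm, hh0]
    simp only [Complex.zero_im]
    exact Real.exp_le_exp.mpr (him t ht)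
  have heq := Complex.eqOn_of_isPreconnected_of_isMaxOn_norm hUconv.isPreconnected hUopen
    hφdiff h0U hmax
  have hφ1 : φ 1 = φ 0 := heq h1U
  have him1 : (h 1).im = 0 := by
    have hn1 : Real.exp ((h 1).im) = Real.exp ((h 0).im) := by
      rw [← hnorm, ← hnorm, hφ1]
    rw [hh0] at hn1
    simpa using Real.exp_injective hn1
  -- now conclude the polynomial in the first variable at `t = 1` is constant
  have hdeg : (q 1).natDegree = 0 := by
    by_contra hpos
    have := (logderiv_im (h1U 0) (q 1).natDegree (q 1) le_rfl (hqroot 1 h1U)).2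
      (Nat.pos_of_ne_zero hpos)
    rw [hq_at, hq_deriv_at] at this
    rw [him1] at this
    exact lt_irrefl 0 this
  have hd0 : (q 1).derivative = 0 := Polynomial.derivative_of_natDegree_zero hdeg
  have : G.eval 1 = 0 := by
    rw [← hq_deriv_at 1, hd0, Polynomial.eval_zero]
  rw [hGeval, hℓ1] at this
  exact this
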